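/- (Smoothness of the smooth maximum, Fact A.1, Property 3.) For every integer m ≥ 1, every real β > 0, and all x, h ∈ ℝ^m: smax_β(x + h) ≤ smax_β(x) + ∑_{i=1}^m p_i·h_i + β·(max_i |h_i|)², where p_i := exp(β·x_i)/∑_{j=1}^m exp(β·x_j). -/

import Mathlib

open Real Finset in
lemma smax_key {m : ℕ} [NeZero m] (p t : Fin m → ℝ) (hp : ∀ i, 0 < p i)
    (hps : ∑ i, p i = 1) (a : ℝ) (ht : ∀ i, |t i| ≤ a) :
    Real.log (∑ i, p i * Real.exp (t i)) ≤ (∑ i, p i * t i) + a ^ 2 / 2 := by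
  set S : ℝ → ℝ := fun s => ∑ i, p i * Real.exp (s * t i) with hSdef
  set N : ℝ → ℝ := fun s => ∑ i, p i * t i * Real.exp (s * t i) with hNdef
  set Q : ℝ → ℝ := fun s => ∑ i, p i * t i ^ 2 * Real.exp (s * t i) with hQdef
  have hSpos : ∀ s, 0 < S s := fun s =>
    Finset.sum_pos (fun i _ => mul_pos (hp i) (Real.exp_pos _)) univ_nonempty
  have hSd : ∀ s, HasDerivAt S (N s) s := by
    intro s
    have h0 : HasDerivAt (fun s => ∑ i, p i * Real.exp (s * t i))
        (∑ i : Fin m, p i * t i * Real.exp (s * t i)) s := by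
      apply HasDerivAt.fun_sum
      intro i _
      have h1 : HasDerivAt (fun s : ℝ => s * t i) (t i) s := hasDerivAt_mul_const (t i)
      have h2 := (h1.exp).const_mul (p i)
      convert h2 using 1
      · rfl
      ring
    simpa [hSdef, hNdef] using h0
  have hNd : ∀ s, HasDerivAt N (Q s) s := by
    intro s
    have h0 : HasDerivAt (fun s => ∑ i, p i * t i * Real.exp (s * t i))
        (∑ i : Fin m, p i * t i ^ 2 * Real.exp (s * t i)) s := by
      apply HasDerivAt.fun_sum
      intro i _
      have h1 : HasDerivAt (fun s : ℝ => s * t i) (t i) s := hasDerivAt_mul_const (t i)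
      have h2 := (h1.exp).const_mul (p i * t i)
      convert h2 using 1
      · rfl
      ring
    simpa [hNdef, hQdef] using h0
  have hS0 : S 0 = 1 := by simp [hSdef, hps]
  have hN0 : N 0 = ∑ i, p i * t i := by simp [hNdef]
  have hS1 : S 1 = ∑ i, p i * Real.exp (t i) := by simp [hSdef]
  have ha : 0 ≤ a := le_trans (abs_nonneg _) (ht ⟨0, Nat.pos_of_ne_zero (NeZero.ne m)⟩)
  have hQle : ∀ s, Q s ≤ a ^ 2 * S s := by
    intro s
    rw [hQdef, hSdef]
    simp only
    rw [Finset.mul_sum]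
    apply Finset.sum_le_sum
    intro i _
    have h1 := abs_le.mp (ht i)
    have h2 := (hp i).le
    have h3 := (Real.exp_pos (s * t i)).le
    have h4 : t i ^ 2 ≤ a ^ 2 := sq_le_sq' (by linarith [h1.1]) h1.2
    nlinarith [mul_nonneg h2 h3]
  have hDd : ∀ s, HasDerivAt (fun s => N s / S s)
      ((Q s * S s - N s * N s) / (S s) ^ 2) s := by
    intro s
    exact (hNd s).div (hSd s) (hSpos s).ne'
  have hgbound : ∀ s, (Q s * S s - N s * N s) / (S s) ^ 2 ≤ a ^ 2 := by
    intro s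
    rw [div_le_iff₀ (pow_pos (hSpos s) 2)]
    nlinarith [sq_nonneg (N s), hQle s, hSpos s]
  -- Step 1 : N s / S s ≤ N 0 / S 0 + a^2 s  for s ∈ [0,1]
  have hψ₁d : ∀ s : ℝ, HasDerivAt (fun s => N s / S s - N 0 / S 0 - a ^ 2 * s)
      ((Q s * S s - N s * N s) / (S s) ^ 2 - a ^ 2) s := by
    intro s
    have h1 : HasDerivAt (fun s : ℝ => a ^ 2 * s) (a ^ 2) s := by
      simpa using (hasDerivAt_id s).const_mul (a ^ 2)
    exact ((hDd s).sub_const (N 0 / S 0)).sub h1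
  have hstep1 : ∀ s ∈ Set.Icc (0:ℝ) 1, N s / S s - N 0 / S 0 - a ^ 2 * s ≤ 0 := by
    have hdiff : Differentiable ℝ (fun s => N s / S s - N 0 / S 0 - a ^ 2 * s) :=
      fun s => (hψ₁d s).differentiableAt
    have hanti : AntitoneOn (fun s => N s / S s - N 0 / S 0 - a ^ 2 * s) (Set.Icc 0 1) := by
      apply antitoneOn_of_deriv_nonpos (convex_Icc 0 1) hdiff.continuous.continuousOn
        (fun s _ => (hdiff s).differentiableWithinAt)
      intro s _
      rw [(hψ₁d s).deriv]
      linarith [hgbound s]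
    intro s hs
    have := hanti (Set.left_mem_Icc.mpr one_pos.le) hs hs.1
    simpa using this
  -- Step 2
  have hψ₂d : ∀ s : ℝ, HasDerivAt
      (fun s => Real.log (S s) - (N 0 / S 0) * s - a ^ 2 * s ^ 2 / 2)
      (N s / S s - N 0 / S 0 - a ^ 2 * s) s := by
    intro s
    have h1 : HasDerivAt (fun s => Real.log (S s)) (N s / S s) s :=
      (hSd s).log (hSpos s).ne'
    have h2 : HasDerivAt (fun s : ℝ => (N 0 / S 0) * s) (N 0 / S 0) s := by
      simpa using (hasDerivAt_id s).const_mul (N 0 / S 0)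
    have h3 : HasDerivAt (fun s : ℝ => a ^ 2 * s ^ 2 / 2) (a ^ 2 * s) s := by
      have := ((hasDerivAt_pow 2 s).const_mul (a ^ 2)).div_const 2
      simpa using this.congr_deriv (by ring)
    exact (h1.sub h2).sub h3
  have hdiff2 : Differentiable ℝ
      (fun s => Real.log (S s) - (N 0 / S 0) * s - a ^ 2 * s ^ 2 / 2) :=
    fun s => (hψ₂d s).differentiableAt
  have hanti2 : AntitoneOn
      (fun s => Real.log (S s) - (N 0 / S 0) * s - a ^ 2 * s ^ 2 / 2) (Set.Icc 0 1) := by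
    apply antitoneOn_of_deriv_nonpos (convex_Icc 0 1) hdiff2.continuous.continuousOn
      (fun s _ => (hdiff2 s).differentiableWithinAt)
    intro s hs
    rw [(hψ₂d s).deriv]
    exact hstep1 s (interior_subset hs)
  have hfin := hanti2 (Set.left_mem_Icc.mpr one_pos.le)
      (Set.right_mem_Icc.mpr one_pos.le) zero_le_one
  simp only [hS0, hS1, hN0, Real.log_one] at hfin
  simp only [mul_zero, mul_one, sub_zero, zero_pow, one_pow, div_one] at hfin
  norm_num at hfin
  linarith

/-- The smooth maximum `smax_β(x) = (1/β)·ln(∑ i, exp(β·x_i))`. -/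
noncomputable def smax {m : ℕ} (β : ℝ) (x : Fin m → ℝ) : ℝ :=
  (1 / β) * Real.log (∑ i, Real.exp (β * x i))

/-- Fact A.1, Property 3: β-smoothness of the smooth maximum with respect to the
ℓ∞-norm (the norm on the Pi type `Fin m → ℝ` is the sup norm). -/
theorem smax_smooth (m : ℕ) (hm : 1 ≤ m) (β : ℝ) (hβ : 0 < β)
    (x h : Fin m → ℝ) (p : Fin m → ℝ)
    (hp : ∀ i, p i = Real.exp (β * x i) / ∑ j, Real.exp (β * x j)) :
    smax β (x + h) ≤ smax β x + (∑ i, p i * h i) + β * ‖h‖ ^ 2 := by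
  open Real Finset in
  haveI : NeZero m := ⟨by omega⟩
  set S : ℝ := ∑ j, Real.exp (β * x j) with hSdef
  have hS : 0 < S :=
    Finset.sum_pos (fun i _ => Real.exp_pos _) univ_nonempty
  have hppos : ∀ i, 0 < p i := fun i => by
    rw [hp i]; exact div_pos (Real.exp_pos _) hS
  have hpsum : ∑ i, p i = 1 := by
    simp only [hp]
    rw [← Finset.sum_div, ← hSdef, div_self hS.ne']
  have hht : ∀ i, |β * h i| ≤ β * ‖h‖ := by
    intro i
    rw [abs_mul, abs_of_pos hβ]
    exact mul_le_mul_of_nonneg_left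
      ((Real.norm_eq_abs (h i)) ▸ norm_le_pi_norm h i) hβ.le
  have hkey := smax_key p (fun i => β * h i) hppos hpsum (β * ‖h‖) hht
  -- rewrite LHS of hkey
  have hL : (∑ i, p i * Real.exp (β * h i))
      = (∑ i, Real.exp (β * (x i + h i))) / S := by
    rw [Finset.sum_div]
    apply Finset.sum_congr rfl
    intro i _
    rw [hp i, div_mul_eq_mul_div, ← Real.exp_add, mul_add]
  have hT : 0 < ∑ i, Real.exp (β * (x i + h i)) :=
    Finset.sum_pos (fun i _ => Real.exp_pos _) univ_nonempty
  rw [hL, Real.log_div hT.ne' hS.ne'] at hkey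
  have hpt : (∑ i, p i * (β * h i)) = β * ∑ i, p i * h i := by
    rw [Finset.mul_sum]; apply Finset.sum_congr rfl; intro i _; ring
  rw [hpt] at hkey
  -- now divide by β
  have hsmax : smax β (x + h) = (1 / β) * Real.log (∑ i, Real.exp (β * (x i + h i))) := by
    simp [smax, Pi.add_apply]
  have hnorm : 0 ≤ ‖h‖ := norm_nonneg h
  rw [hsmax, smax]
  rw [← hSdef]
  have hb1 : (1 / β) * Real.log (∑ i, Real.exp (β * (x i + h i)))
      ≤ (1 / β) * (Real.log S + β * ∑ i, p i * h i + (β * ‖h‖) ^ 2 / 2) := by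
    apply mul_le_mul_of_nonneg_left _ (by positivity)
    linarith
  refine hb1.trans ?_
  rw [mul_add, mul_add]
  have e1 : (1 / β) * (β * ∑ i, p i * h i) = ∑ i, p i * h i := by
    field_simp
  have e2 : (1 / β) * ((β * ‖h‖) ^ 2 / 2) ≤ β * ‖h‖ ^ 2 := by
    rw [mul_pow]
    rw [div_mul_eq_mul_div, one_mul]
    rw [div_le_iff₀ hβ]
    · nlinarith [sq_nonneg ‖h‖]
  linarith [e1, e2]
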